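/- Let p be a prime and let H be a group with an abelian normal subgroup T that is isomorphic as a group to a product of r copies of the circle group {z ∈ ℂ : |z| = 1}, where r ≥ 1, and such that the quotient H/T is a finite group of p-power order. Then there exists g ∈ T with the following properties: g has order exactly p, g lies in the center of H, and g is a p-th power in T (there exists x ∈ T with x^p = g). In particular, g lies in the kernel of every homomorphism from H to an elementary abelian p-group. -/

import Mathlib

open Complex

lemma circle_coe_pow (z : Circle) (n : ℕ) : ((z ^ n : Circle) : ℂ) = (z : ℂ) ^ n :=
  map_pow Circle.coeHom z n

lemma circle_exp_pow (t : ℝ) (n : ℕ) : Circle.exp t ^ n = Circle.exp (n * t) := by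
  ext
  rw [circle_coe_pow, Circle.coe_exp, Circle.coe_exp, ← Complex.exp_nat_mul]
  push_cast
  ring_nf

lemma circle_pow_surj (n : ℕ) (hn : n ≠ 0) (z : Circle) : ∃ x : Circle, x ^ n = z := by
  refine ⟨Circle.exp (Complex.arg z / n), ?_⟩
  rw [circle_exp_pow, mul_div_cancel₀ _ (by exact_mod_cast hn), Circle.exp_arg]

lemma circle_torsion_finite (n : ℕ) (hn : n ≠ 0) : Finite {z : Circle // z ^ n = 1} := by
  have hfin : Set.Finite {x : ℂ | x ^ n = 1} := by
    have h : {x : ℂ | x ^ n = 1} = {x : ℂ | (Polynomial.X ^ n - Polynomial.C (1:ℂ)).IsRoot x} := by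
      ext x; simp [Polynomial.IsRoot, sub_eq_zero]
    rw [h]
    exact Polynomial.finite_setOf_isRoot (Polynomial.X_pow_sub_C_ne_zero (Nat.pos_of_ne_zero hn) 1)
  have : Finite {x : ℂ | x ^ n = 1} := hfin
  refine Finite.of_injective (fun z => (⟨((z : Circle) : ℂ), by
      simp only [Set.mem_setOf_eq, ← circle_coe_pow, z.2, Circle.coe_one]⟩ :
      {x : ℂ | x ^ n = 1})) ?_
  intro a b h
  exact Subtype.ext (Circle.coe_injective (Subtype.mk_eq_mk.mp h))

lemma circle_exists_ne_one (p : ℕ) (hp : p.Prime) :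
    ∃ z : Circle, z ^ p = 1 ∧ z ≠ 1 := by
  have hp0 : (p : ℝ) ≠ 0 := by exact_mod_cast hp.ne_zero
  refine ⟨Circle.exp (2 * Real.pi / p), ?_, ?_⟩
  · rw [circle_exp_pow]
    have h : (p : ℝ) * (2 * Real.pi / p) = 2 * Real.pi := by field_simp
    rw [h, Circle.exp_two_pi]
  · intro h
    have h' : Complex.exp ((2 * Real.pi / p : ℝ) * Complex.I) = 1 := by
      have := congrArg Subtype.val h
      simpa [Circle.coe_exp] using this
    rw [Complex.exp_eq_one_iff] at h'
    obtain ⟨m, hm⟩ := h'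
    have hm' : ((2 * Real.pi / p : ℝ) : ℂ) * I = ((2 * Real.pi * m : ℝ) : ℂ) * I := by
      push_cast at hm ⊢
      linear_combination hm
    have hR : (2 * Real.pi / p : ℝ) = 2 * Real.pi * m :=
      ofReal_inj.mp (mul_right_cancel₀ Complex.I_ne_zero hm')
    field_simp at hR
    have h3 : (2 * Real.pi) * 1 = (2 * Real.pi) * ((m : ℝ) * p) := by linear_combination (2 * Real.pi) * hR
    have h1 : (m : ℝ) * p = 1 := (mul_left_cancel₀ (ne_of_gt Real.two_pi_pos) h3).symm
    have h4 : (m * (p : ℤ) : ℤ) = 1 := by exact_mod_cast h1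
    have hdvd : (p : ℤ) ∣ 1 := Dvd.intro_left m h4
    have := Int.le_of_dvd one_pos hdvd
    have h2 : (2 : ℤ) ≤ p := by exact_mod_cast hp.two_le
    omega

/-- If `H` is a group with an abelian normal subgroup `T` isomorphic
to a product of `r ≥ 1` copies of the circle group such that `H/T` is a finite
`p`-group, then there is an element `g ∈ T` of order exactly `p` which is central
in `H` and is a `p`-th power in `T`; consequently `g` is killed by every
homomorphism from `H` to an elementary abelian `p`-group. -/
theorem stmt5 (p : ℕ) (hp : p.Prime)
    (H : Type) [Group H]
    (T : Subgroup H) [T.Normal]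
    (habelian : ∀ a ∈ T, ∀ b ∈ T, a * b = b * a)
    (r : ℕ) (hr : 1 ≤ r) (eT : T ≃* (Fin r → Circle))
    (k : ℕ) (hHT : Nat.card (H ⧸ T) = p ^ k) :
    ∃ g ∈ T, orderOf g = p ∧ g ∈ Subgroup.center H ∧
      (∃ x ∈ T, x ^ p = g) ∧
      (∀ (E : Type) (_ : CommGroup E),
        (∀ a : E, a ^ p = 1) → ∀ f : H →* E, f g = 1) := by
  classical
  haveI : Fact p.Prime := ⟨hp⟩
  -- the p-torsion subgroup Ω of T
  set Ω : Subgroup H :=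
    { carrier := {h : H | h ∈ T ∧ h ^ p = 1}
      one_mem' := ⟨T.one_mem, one_pow p⟩
      mul_mem' := fun {a b} ha hb => ⟨T.mul_mem ha.1 hb.1, by
        have hc : Commute a b := habelian a ha.1 b hb.1
        rw [hc.mul_pow, ha.2, hb.2, one_mul]⟩
      inv_mem' := fun {a} ha => ⟨T.inv_mem ha.1, by rw [inv_pow, ha.2, inv_one]⟩ } with hΩ
  have hmemΩ : ∀ h : H, h ∈ Ω ↔ h ∈ T ∧ h ^ p = 1 := fun h => Iff.rfl
  haveI : Ω.Normal := by
    constructor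
    intro n hn g
    refine ⟨Subgroup.Normal.conj_mem ‹T.Normal› n hn.1 g, ?_⟩
    rw [conj_pow, hn.2, mul_one, mul_inv_cancel]
  -- Ω is finite
  haveI hfinΩ : Finite Ω := by
    haveI hC : Finite {z : Circle // z ^ p = 1} := circle_torsion_finite p hp.ne_zero
    haveI : Finite {v : Fin r → Circle // v ^ p = 1} := by
      refine Finite.of_injective
        (fun v => (fun i => ⟨v.1 i, congrFun v.2 i⟩ : Fin r → {z : Circle // z ^ p = 1})) ?_
      intro a b h
      apply Subtype.ext
      funext i
      have h2 := congrFun h i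
      have h3 := congrArg Subtype.val h2
      exact h3
    refine Finite.of_injective (fun ω : Ω => (⟨eT ⟨ω.1, ω.2.1⟩, ?_⟩ :
      {v : Fin r → Circle // v ^ p = 1})) ?_
    · rw [← map_pow]
      have : (⟨ω.1, ω.2.1⟩ : T) ^ p = 1 := Subtype.ext (by
        rw [SubgroupClass.coe_pow]
        exact ω.2.2)
      rw [this, map_one]
    · intro a b h
      have := eT.injective (Subtype.mk_eq_mk.mp h)
      exact Subtype.ext (Subtype.mk_eq_mk.mp this)
  -- a nontrivial element of Ω
  obtain ⟨z₀, hz₀p, hz₀⟩ := circle_exists_ne_one p hp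
  set t₀ : T := eT.symm (fun _ => z₀) with ht₀
  have ht₀p : t₀ ^ p = 1 := by
    rw [ht₀, ← map_pow, ← map_one eT.symm]
    congr 1
    funext i
    exact hz₀p
  have ht₀ne : t₀ ≠ 1 := by
    intro h
    apply hz₀
    have := congrArg eT h
    rw [ht₀, MulEquiv.apply_symm_apply, map_one] at this
    exact congrFun this ⟨0, hr⟩
  have ht₀Ω : (t₀ : H) ∈ Ω := ⟨t₀.2, by rw [← SubgroupClass.coe_pow, ht₀p, OneMemClass.coe_one]⟩
  -- p divides the cardinality of Ω
  have hordt₀ : orderOf (⟨(t₀ : H), ht₀Ω⟩ : Ω) = p := by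
    apply orderOf_eq_prime
    · exact Subtype.ext (by rw [SubgroupClass.coe_pow]; exact ht₀Ω.2)
    · intro h
      have h5 := congrArg Subtype.val h
      exact ht₀ne (Subtype.ext h5)
  have hpdvd : p ∣ Nat.card Ω := hordt₀ ▸ orderOf_dvd_natCard _
  -- conjugation action of H/T on Ω
  set ψ : H →* MulAut Ω := MulAut.conjNormal with hψ
  have hker : T ≤ ψ.ker := by
    intro t ht
    rw [MonoidHom.mem_ker]
    ext ω
    show ((ψ t ω : Ω) : H) = ω
    rw [hψ, MulAut.conjNormal_apply]
    have := habelian t ht ω ω.2.1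
    rw [this, mul_inv_cancel_right]
  set ψ' : H ⧸ T →* MulAut Ω := QuotientGroup.lift T ψ hker with hψ'
  letI : MulAction (H ⧸ T) Ω := MulAction.compHom Ω ψ'
  haveI hpG : IsPGroup p (H ⧸ T) := IsPGroup.of_card hHT
  have hmod := hpG.card_modEq_card_fixedPoints Ω
  have hfix : p ∣ Nat.card (MulAction.fixedPoints (H ⧸ T) Ω) := by
    have := (hmod.symm.trans ((Nat.modEq_zero_iff_dvd).mpr hpdvd)).dvd
    exact (Nat.modEq_zero_iff_dvd).mp (hmod.symm.trans ((Nat.modEq_zero_iff_dvd).mpr hpdvd))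
  have hone : (1 : Ω) ∈ MulAction.fixedPoints (H ⧸ T) Ω := fun q => by
    show ψ' q • (1 : Ω) = 1
    exact map_one (ψ' q)
  -- find a nontrivial fixed point
  have hex : ∃ ω : Ω, ω ∈ MulAction.fixedPoints (H ⧸ T) Ω ∧ ω ≠ 1 := by
    by_contra hcon
    push_neg at hcon
    have hset : MulAction.fixedPoints (H ⧸ T) Ω = {1} := by
      apply Set.eq_singleton_iff_unique_mem.mpr
      exact ⟨hone, fun ω hω => hcon ω hω⟩
    rw [hset] at hfix
    simp at hfix
    exact hp.ne_one hfix
  obtain ⟨ω, hωfix, hωne⟩ := hex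
  refine ⟨(ω : H), ω.2.1, ?_, ?_, ?_, ?_⟩
  · -- order
    apply orderOf_eq_prime
    · exact ω.2.2
    · intro h
      exact hωne (Subtype.ext h)
  · -- central
    rw [Subgroup.mem_center_iff]
    intro h
    have := hωfix (QuotientGroup.mk h)
    have h2 : ψ h ω = ω := by
      have h3 : ψ' (QuotientGroup.mk h) • ω = ω := this
      rwa [hψ', QuotientGroup.lift_mk] at h3
    have h4 : h * (ω : H) * h⁻¹ = (ω : H) := by
      have := congrArg (Subtype.val) h2
      rwa [hψ, MulAut.conjNormal_apply] at this
    calc h * (ω : H) = (h * (ω : H) * h⁻¹) * h := by group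
    _ = (ω : H) * h := by rw [h4]
  · -- p-th power
    set v : Fin r → Circle := eT ⟨(ω : H), ω.2.1⟩ with hv
    choose w hw using fun i => circle_pow_surj p hp.ne_zero (v i)
    refine ⟨((eT.symm w : T) : H), (eT.symm w).2, ?_⟩
    rw [← SubgroupClass.coe_pow, ← map_pow]
    have : w ^ p = v := funext hw
    rw [this, hv, MulEquiv.symm_apply_apply]
  · -- killed by homs to elementary abelian p-groups
    intro E _ hE f
    set v : Fin r → Circle := eT ⟨(ω : H), ω.2.1⟩ with hv
    choose w hw using fun i => circle_pow_surj p hp.ne_zero (v i)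
    have hx : ((eT.symm w : T) : H) ^ p = (ω : H) := by
      rw [← SubgroupClass.coe_pow, ← map_pow]
      have : w ^ p = v := funext hw
      rw [this, hv, MulEquiv.symm_apply_apply]
    rw [← hx, map_pow, hE]
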